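/- The facet of the Voronoi cell of the A_4 root lattice orthogonal to the highest root ω_1 + ω_4 is a rhombohedron: the three generating edge vectors ω_1 − ω_2, ω_2 − ω_3, ω_3 − ω_4 all have length 2/√5, and the angle between any two of them is arccos(−1/4). -/

import Mathlib

/-- Fundamental weight `ω_i` of `A_4` in `ℝ^5`:
`ω_i` has first `i` coordinates `(5-i)/5` and remaining coordinates `-i/5`. -/
noncomputable def omegaA4 (i : ℕ) : EuclideanSpace ℝ (Fin 5) :=
  WithLp.toLp 2 (fun j : Fin 5 => if (j : ℕ) < i then (5 - (i : ℝ)) / 5 else -(i : ℝ) / 5)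

lemma inner_vA4 : ∀ a b : ℕ, a < 3 → b < 3 →
    (inner ℝ (omegaA4 (a+1) - omegaA4 (a+2)) (omegaA4 (b+1) - omegaA4 (b+2)) : ℝ)
      = if a = b then 4/5 else -1/5 := by
  intro a b ha hb
  interval_cases a <;> interval_cases b <;>
    simp [omegaA4, PiLp.inner_apply, PiLp.sub_apply, Fin.sum_univ_five, RCLike.inner_apply, -inner_self_eq_norm_sq_to_K,
      show ((3:Fin 5):ℕ)=3 from rfl, show ((4:Fin 5):ℕ)=4 from rfl] <;>
    norm_num

lemma norm_vA4 (a : ℕ) (ha : a < 3) :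
    ‖omegaA4 (a+1) - omegaA4 (a+2)‖ = 2 / Real.sqrt 5 := by
  have h := inner_vA4 a a ha ha
  rw [if_pos rfl] at h
  rw [norm_eq_sqrt_real_inner, h, show (4:ℝ)/5 = (2/Real.sqrt 5)^2 by
      rw [div_pow, Real.sq_sqrt] <;> norm_num]
  exact Real.sqrt_sq (by positivity)

/-- The facet of the Voronoi cell of the `A_4` root lattice is a rhombohedron:
its generating edges `ω_1 - ω_2, ω_2 - ω_3, ω_3 - ω_4` all have length `2/√5`
and the angle between any two of them is `arccos(-1/4)`. -/
theorem rhombohedron_facetA4 :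
    (∀ i : Fin 3, ‖omegaA4 ((i : ℕ) + 1) - omegaA4 ((i : ℕ) + 2)‖ = 2 / Real.sqrt 5) ∧
    (∀ i j : Fin 3, i ≠ j →
      InnerProductGeometry.angle (omegaA4 ((i : ℕ) + 1) - omegaA4 ((i : ℕ) + 2))
          (omegaA4 ((j : ℕ) + 1) - omegaA4 ((j : ℕ) + 2))
        = Real.arccos (-(1 / 4))) := by
  constructor
  · intro i; exact norm_vA4 i i.isLt
  · intro i j hij
    have hne : (i : ℕ) ≠ (j : ℕ) := fun h => hij (Fin.ext h)
    have h := inner_vA4 i j i.isLt j.isLt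
    rw [if_neg hne] at h
    rw [InnerProductGeometry.angle, h, norm_vA4 i i.isLt, norm_vA4 j j.isLt]
    have h5 : Real.sqrt 5 > 0 := Real.sqrt_pos.mpr (by norm_num)
    congr 1
    rw [div_mul_div_comm, ← Real.sqrt_mul_self (le_of_lt h5)]
    field_simp
    rw [Real.sq_sqrt (by positivity), Real.sq_sqrt (by norm_num)]
    ring
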